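/- Let τ > 0, m ≥ 1, and let λ : Fin m → ℝ satisfy 0 < λ_i < π/(2τ) for every i. Then Σ_{i} cos(τλ_i)/(2λ_i(1 − sin(τλ_i))) ≥ m·τ/(2(1 − sin(z*))), where z* is the unique positive solution of cos(z) = z; equality holds if and only if λ_i = z*/τ for every i. -/

import Mathlib

open Real

private lemma perf_d1 (c : ℝ) (x : ℝ) :
    HasDerivAt (fun x : ℝ => (1 - c) * Real.cos x - x * (1 - Real.sin x))
      (c * Real.sin x + x * Real.cos x - 1) x := by
  have h1 : HasDerivAt (fun x : ℝ => (1 - c) * Real.cos x) ((1 - c) * (-Real.sin x)) x :=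
    (Real.hasDerivAt_cos x).const_mul _
  have h2 : HasDerivAt (fun x : ℝ => x * (1 - Real.sin x))
      (1 * (1 - Real.sin x) + x * (0 - Real.cos x)) x :=
    (hasDerivAt_id x).mul ((hasDerivAt_const x 1).sub (Real.hasDerivAt_sin x))
  exact (h1.sub h2).congr_deriv (by ring)

private lemma perf_d2 (c : ℝ) (x : ℝ) :
    HasDerivAt (fun x : ℝ => c * Real.sin x + x * Real.cos x - 1)
      ((c + 1) * Real.cos x - x * Real.sin x) x := by
  have h1 : HasDerivAt (fun x : ℝ => c * Real.sin x) (c * Real.cos x) x :=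
    (Real.hasDerivAt_sin x).const_mul _
  have h2 : HasDerivAt (fun x : ℝ => x * Real.cos x)
      (1 * Real.cos x + x * (-Real.sin x)) x :=
    (hasDerivAt_id x).mul (Real.hasDerivAt_cos x)
  exact ((h1.add h2).sub_const 1).congr_deriv (by ring)

private lemma perf_d3 (c : ℝ) (x : ℝ) :
    HasDerivAt (fun x : ℝ => (c + 1) * Real.cos x - x * Real.sin x)
      (-((c + 1) * Real.sin x) - (Real.sin x + x * Real.cos x)) x := by
  have h1 : HasDerivAt (fun x : ℝ => (c + 1) * Real.cos x) ((c + 1) * (-Real.sin x)) x :=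
    (Real.hasDerivAt_cos x).const_mul _
  have h2 : HasDerivAt (fun x : ℝ => x * Real.sin x)
      (1 * Real.sin x + x * Real.cos x) x :=
    (hasDerivAt_id x).mul (Real.hasDerivAt_sin x)
  exact (h1.sub h2).congr_deriv (by ring)

/-- The key pointwise strict inequality: for `0 < x < π/2`, `x ≠ z`,
`x (1 - sin x) < cos x (1 - sin z)`, where `cos z = z`, `z > 0`. -/
private lemma perf_key (z : ℝ) (hz : 0 < z) (hzfix : Real.cos z = z) :
    ∀ x ∈ Set.Ioo (0 : ℝ) (Real.pi / 2), x ≠ z →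
      x * (1 - Real.sin x) < Real.cos x * (1 - Real.sin z) := by
  have hπ : (3 : ℝ) < Real.pi := Real.pi_gt_three
  have hz1 : z ≤ 1 := hzfix ▸ Real.cos_le_one z
  have hzπ : z < Real.pi / 2 := by linarith
  have hsz : 0 < Real.sin z := Real.sin_pos_of_pos_of_lt_pi hz (by linarith)
  set c : ℝ := Real.sin z with hc
  set h : ℝ → ℝ := fun x => (1 - c) * Real.cos x - x * (1 - Real.sin x) with hdefh
  set h1 : ℝ → ℝ := fun x => c * Real.sin x + x * Real.cos x - 1 with hdefh1
  set h2 : ℝ → ℝ := fun x => (c + 1) * Real.cos x - x * Real.sin x with hdefh2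
  have hder1 : ∀ x, HasDerivAt h (h1 x) x := fun x => perf_d1 c x
  have hder2 : ∀ x, HasDerivAt h1 (h2 x) x := fun x => perf_d2 c x
  have hderiv1 : deriv h = h1 := funext fun x => (hder1 x).deriv
  have hderiv2 : deriv h1 = h2 := funext fun x => (hder2 x).deriv
  have hcont : Continuous h := by
    apply Continuous.sub (continuous_const.mul Real.continuous_cos)
    exact continuous_id.mul (continuous_const.sub Real.continuous_sin)
  have hcont1 : Continuous h1 := by
    apply Continuous.sub _ continuous_const
    exact (continuous_const.mul Real.continuous_sin).add (continuous_id.mul Real.continuous_cos)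
  -- h2 is strictly decreasing on [0, π/2]
  have hanti2 : StrictAntiOn h2 (Set.Icc 0 (Real.pi / 2)) := by
    apply strictAntiOn_of_deriv_neg (convex_Icc _ _)
    · exact (Continuous.sub (continuous_const.mul Real.continuous_cos)
        (continuous_id.mul Real.continuous_sin)).continuousOn
    · intro x hx
      rw [interior_Icc] at hx
      rw [(perf_d3 c x).deriv]
      have hsx : 0 < Real.sin x := Real.sin_pos_of_pos_of_lt_pi hx.1 (by linarith [hx.2])
      have hcx : 0 < Real.cos x := Real.cos_pos_of_mem_Ioo ⟨by linarith [hx.1, Real.pi_div_two_pos], hx.2⟩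
      nlinarith [hx.1]
  -- key values
  have hh1z : h1 z = 0 := by
    simp only [hdefh1]
    nlinarith [Real.sin_sq_add_cos_sq z]
  have hhz : h z = 0 := by simp only [hdefh]; rw [hzfix]; ring
  have hhalf : h (Real.pi / 2) = 0 := by
    simp only [hdefh, Real.cos_pi_div_two, Real.sin_pi_div_two]; ring
  have hh2z : 0 < h2 z := by
    simp only [hdefh2]; rw [hzfix]; nlinarith
  -- Part A: h1 < 0 on [0, z)
  have hmono1 : StrictMonoOn h1 (Set.Icc 0 z) := by
    apply strictMonoOn_of_deriv_pos (convex_Icc _ _) hcont1.continuousOn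
    intro x hx
    rw [interior_Icc] at hx
    rw [hderiv2]
    have : h2 z < h2 x := hanti2 ⟨le_of_lt hx.1, by linarith [hx.2]⟩
      ⟨le_of_lt hz, le_of_lt hzπ⟩ hx.2
    linarith
  have hAneg : ∀ x ∈ Set.Ico (0:ℝ) z, h1 x < 0 := by
    intro x hx
    have := hmono1 ⟨hx.1, le_of_lt hx.2⟩ ⟨le_of_lt hz, le_refl z⟩ hx.2
    linarith [hh1z]
  have hA : ∀ x ∈ Set.Ioo (0:ℝ) z, 0 < h x := by
    intro x hx
    have hanti : StrictAntiOn h (Set.Icc 0 z) := by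
      apply strictAntiOn_of_deriv_neg (convex_Icc _ _) hcont.continuousOn
      intro y hy
      rw [interior_Icc] at hy
      rw [hderiv1]
      exact hAneg y ⟨le_of_lt hy.1, hy.2⟩
    have := hanti ⟨le_of_lt hx.1, le_of_lt hx.2⟩ ⟨le_of_lt hz, le_refl z⟩ hx.2
    linarith [hhz]
  -- Part B: h > 0 on (z, π/2)
  have hB : ∀ x ∈ Set.Ioo z (Real.pi / 2), 0 < h x := by
    by_contra hcon
    push_neg at hcon
    obtain ⟨y, hy, hyle⟩ := hcon
    -- minimum of h on [z, π/2]
    obtain ⟨y₀, hy₀mem, hy₀min⟩ :=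
      (isCompact_Icc : IsCompact (Set.Icc z (Real.pi / 2))).exists_isMinOn
        (Set.nonempty_Icc.mpr (le_of_lt hzπ)) hcont.continuousOn
    have hy₀le : h y₀ ≤ h y := hy₀min ⟨le_of_lt hy.1, le_of_lt hy.2⟩
    -- get an interior minimum point
    have hy₀le0 : h y₀ ≤ 0 := le_trans hy₀le hyle
    have hint : ∃ w ∈ Set.Ioo z (Real.pi / 2), IsMinOn h (Set.Icc z (Real.pi / 2)) w := by
      rcases lt_or_eq_of_le hy₀le0 with hlt | heq
      · refine ⟨y₀, ?_, hy₀min⟩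
        rcases eq_or_lt_of_le hy₀mem.1 with h1' | h1'
        · exfalso; rw [← h1', hhz] at hlt; linarith
        rcases eq_or_lt_of_le hy₀mem.2 with h2' | h2'
        · exfalso; rw [h2', hhalf] at hlt; linarith
        exact ⟨h1', h2'⟩
      · refine ⟨y, hy, ?_⟩
        intro u hu
        have h1u : h y₀ ≤ h u := hy₀min hu
        simp only [Set.mem_setOf_eq]
        linarith
    obtain ⟨w, hw, hwmin⟩ := hint
    have hloc : IsLocalMin h w := hwmin.isLocalMin (Icc_mem_nhds hw.1 hw.2)
    have hh1w : h1 w = 0 := by rw [← hderiv1]; exact hloc.deriv_eq_zero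
    -- Rolle for h1 on [z, w]
    obtain ⟨r, hr, hrz⟩ := exists_deriv_eq_zero hw.1 hcont1.continuousOn (hh1z.trans hh1w.symm)
    rw [hderiv2] at hrz
    -- h2 < 0 on (r, π/2], hence h1 strictly decreasing on [r, w], so h1 > 0 on [r, w)
    have hh2neg : ∀ x ∈ Set.Ioc r (Real.pi / 2), h2 x < 0 := by
      intro x hx
      have := hanti2 ⟨by linarith [hr.1, hz], by linarith [hr.2, hw.2]⟩
        ⟨by linarith [hr.1, hz, hx.1], hx.2⟩ hx.1
      linarith [hrz]
    have hanti1 : StrictAntiOn h1 (Set.Icc r (Real.pi / 2)) := by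
      apply strictAntiOn_of_deriv_neg (convex_Icc _ _) hcont1.continuousOn
      intro x hx
      rw [interior_Icc] at hx
      rw [hderiv2]
      exact hh2neg x ⟨hx.1, le_of_lt hx.2⟩
    have hh1pos : ∀ x ∈ Set.Ioo r w, 0 < h1 x := by
      intro x hx
      have := hanti1 ⟨le_of_lt hx.1, by linarith [hx.2, hw.2]⟩
        ⟨le_of_lt hr.2, le_of_lt hw.2⟩ hx.2
      linarith [hh1w]
    have hmonoh : StrictMonoOn h (Set.Icc r w) := by
      apply strictMonoOn_of_deriv_pos (convex_Icc _ _) hcont.continuousOn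
      intro x hx
      rw [interior_Icc] at hx
      rw [hderiv1]
      exact hh1pos x hx
    have hrw : h r < h w := hmonoh ⟨le_refl r, le_of_lt hr.2⟩ ⟨le_of_lt hr.2, le_refl w⟩ hr.2
    have : h w ≤ h r := hwmin ⟨le_of_lt hr.1, by linarith [hr.2, hw.2]⟩
    linarith
  -- conclude
  intro x hx hne
  rcases lt_trichotomy x z with hlt | heq | hgt
  · have := hA x ⟨hx.1, hlt⟩; simp only [hdefh] at this; linarith
  · exact absurd heq hne
  · have := hB x ⟨hgt, hx.2⟩; simp only [hdefh] at this; linarith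

/-- Fundamental limit on performance: for `τ > 0` and `λᵢ ∈ (0, π/(2τ))`,
`Σᵢ cos(τλᵢ)/(2λᵢ(1 − sin(τλᵢ))) ≥ m·τ/(2(1 − sin z*))`, where `z*` is the
unique positive solution of `cos z = z`; equality holds iff `λᵢ = z*/τ` for
every `i`. -/
theorem performance_fundamental_limit (τ : ℝ) (hτ : 0 < τ) (m : ℕ) (hm : 1 ≤ m)
    (lam : Fin m → ℝ) (hlam : ∀ i, lam i ∈ Set.Ioo 0 (Real.pi / (2 * τ)))
    (z : ℝ) (hz : 0 < z) (hzfix : Real.cos z = z) :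
    (∑ i, Real.cos (τ * lam i) / (2 * lam i * (1 - Real.sin (τ * lam i))) ≥
        (m : ℝ) * τ / (2 * (1 - Real.sin z))) ∧
      (∑ i, Real.cos (τ * lam i) / (2 * lam i * (1 - Real.sin (τ * lam i))) =
          (m : ℝ) * τ / (2 * (1 - Real.sin z)) ↔ ∀ i, lam i = z / τ) := by
  have hπ : (3 : ℝ) < Real.pi := Real.pi_gt_three
  have hz1 : z ≤ 1 := hzfix ▸ Real.cos_le_one z
  have hzπ : z < Real.pi / 2 := by linarith
  have hcz : 0 < Real.cos z := by rw [hzfix]; exact hz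
  have hsz1 : Real.sin z < 1 := by nlinarith [Real.sin_sq_add_cos_sq z]
  have hden : 0 < 1 - Real.sin z := by linarith
  -- each τ * lam i lies in (0, π/2)
  have ht : ∀ i, τ * lam i ∈ Set.Ioo (0 : ℝ) (Real.pi / 2) := by
    intro i
    obtain ⟨h1, h2⟩ := hlam i
    constructor
    · positivity
    · calc τ * lam i < τ * (Real.pi / (2 * τ)) := by
            apply mul_lt_mul_of_pos_left _ hτ
            exact (hlam i).2
      _ = Real.pi / 2 := by field_simp
  have hsin1 : ∀ i, Real.sin (τ * lam i) < 1 := by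
    intro i
    have := ht i
    have hc : 0 < Real.cos (τ * lam i) :=
      Real.cos_pos_of_mem_Ioo ⟨by linarith [this.1, Real.pi_div_two_pos], this.2⟩
    nlinarith [Real.sin_sq_add_cos_sq (τ * lam i), Real.sin_le_one (τ * lam i)]
  have hdi : ∀ i, 0 < 2 * lam i * (1 - Real.sin (τ * lam i)) := by
    intro i
    have := hsin1 i
    have := (hlam i).1
    nlinarith
  -- pointwise weak inequality (from perf_key, including equality at z)
  have hkey : ∀ x ∈ Set.Ioo (0 : ℝ) (Real.pi / 2),
      x * (1 - Real.sin x) ≤ Real.cos x * (1 - Real.sin z) := by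
    intro x hx
    by_cases hne : x = z
    · subst hne; rw [hzfix]
    · exact le_of_lt (perf_key z hz hzfix x hx hne)
  have hterm : ∀ i, τ / (2 * (1 - Real.sin z)) ≤
      Real.cos (τ * lam i) / (2 * lam i * (1 - Real.sin (τ * lam i))) := by
    intro i
    rw [div_le_div_iff₀ (by linarith) (hdi i)]
    have h := hkey (τ * lam i) (ht i)
    nlinarith [h]
  have hsum : ∑ i : Fin m, τ / (2 * (1 - Real.sin z)) = (m : ℝ) * τ / (2 * (1 - Real.sin z)) := by
    rw [Finset.sum_const, Finset.card_univ, Fintype.card_fin, nsmul_eq_mul]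
    ring
  constructor
  · rw [ge_iff_le, ← hsum]
    exact Finset.sum_le_sum fun i _ => hterm i
  · rw [← hsum]
    rw [eq_comm, Finset.sum_eq_sum_iff_of_le fun i _ => hterm i]
    constructor
    · intro h i
      have hi := h i (Finset.mem_univ i)
      -- from term equality deduce τ * lam i = z
      have heq : (τ * lam i) * (1 - Real.sin (τ * lam i)) =
          Real.cos (τ * lam i) * (1 - Real.sin z) := by
        rw [div_eq_div_iff (by linarith : (0:ℝ) < 2 * (1 - Real.sin z)).ne' (hdi i).ne'] at hi
        nlinarith [hi]
      have htz : τ * lam i = z := by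
        by_contra hne
        have := perf_key z hz hzfix (τ * lam i) (ht i) hne
        linarith
      rw [eq_div_iff hτ.ne']
      linear_combination htz
    · intro h i _
      have hli := h i
      have htz : τ * lam i = z := by rw [hli]; field_simp
      have hlam0 : lam i ≠ 0 := ne_of_gt (hlam i).1
      have hden' : (1 : ℝ) - Real.sin z ≠ 0 := ne_of_gt hden
      rw [htz, hzfix, div_eq_div_iff (by linarith : (0:ℝ) < 2 * (1 - Real.sin z)).ne'
        (by nlinarith [(hlam i).1] : (0:ℝ) < 2 * lam i * (1 - Real.sin z)).ne']
      linear_combination (2 * (1 - Real.sin z)) * htz
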